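/- arXiv:2604.00720 — 2 statements merged into one kernel-verified Lean document; each statement's English description precedes it below -/
import Mathlib

section
/- For every n ≥ 3, the set of special orthogonal matrices with rational entries is dense in the real special orthogonal group: for every real n×n matrix A with Aᵀ·A = 1 and det A = 1, and every ε > 0, there exists an n×n matrix B all of whose entries are rational numbers, satisfying Bᵀ·B = 1, det B = 1, and ‖A − B‖ < ε (entrywise, or in any fixed norm on the matrix space). -/
open Matrix Finset

variable {n : ℕ}

lemma det_add_diagonal_sum (n : ℕ) (A : Matrix (Fin n) (Fin n) ℝ) :
    ∑ d ∈ Fintype.piFinset (fun _ : Fin n => ({1, -1} : Finset ℝ)),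
      (A + diagonal d).det = (2 : ℝ) ^ n * A.det := by
  classical
  set f := (detRowAlternating : (Fin n → ℝ) [⋀^Fin n]→ₗ[ℝ] ℝ) with hf
  set w : Fin n → (Fin n → ℝ) := fun i => Pi.single i 1 with hw
  set T := Fintype.piFinset (fun _ : Fin n => ({1, -1} : Finset ℝ)) with hT
  have hrow : ∀ d : Fin n → ℝ, (A + diagonal d).det
      = ∑ s : Finset (Fin n), (∏ i ∈ s, d i) • f (s.piecewise w A) := by
    intro d
    set m : Fin n → (Fin n → ℝ) := fun i => d i • w i with hm
    set m' : Fin n → (Fin n → ℝ) := fun i => A i with hm'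
    have h2 : (A + diagonal d).det = f (m + m') := by
      show f _ = f _
      congr 1
      funext i j
      simp only [hm, hm', hw, Pi.add_apply, Pi.smul_apply, Pi.single_apply, smul_eq_mul]
      show A i j + (if i = j then d i else 0) = d i * (if j = i then 1 else 0) + A i j
      by_cases h : i = j <;> simp [h, eq_comm] <;> ring
    have hadd := (f : MultilinearMap ℝ (fun _ : Fin n => Fin n → ℝ) ℝ).map_add_univ m m'
    simp only [AlternatingMap.coe_multilinearMap] at hadd
    rw [h2, hadd]
    refine Finset.sum_congr rfl fun s _ => ?_
    have h3 : s.piecewise m m'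
        = s.piecewise (fun i => d i • (s.piecewise w m') i) (s.piecewise w m') := by
      funext i
      by_cases h : i ∈ s <;> simp [Finset.piecewise, h, hm]
    have hps := (f : MultilinearMap ℝ (fun _ : Fin n => Fin n → ℝ) ℝ).map_piecewise_smul d
      (s.piecewise w m') s
    simp only [AlternatingMap.coe_multilinearMap] at hps
    rw [h3, hps]
  rw [Finset.sum_congr rfl (fun d _ => hrow d), Finset.sum_comm]
  rw [Finset.sum_congr rfl (fun s (_ : s ∈ (univ : Finset (Finset (Fin n)))) =>
    (Finset.sum_smul).symm)]
  rw [Finset.sum_eq_single (∅ : Finset (Fin n))]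
  · have hc : T.card = 2 ^ n := by
      rw [hT, Fintype.card_piFinset]
      simp [Finset.card_pair (by norm_num : (1:ℝ) ≠ -1)]
    simp only [Finset.prod_empty, Finset.piecewise_empty, Finset.sum_const, hc]
    rw [nsmul_eq_mul, mul_one, smul_eq_mul]
    push_cast
    rfl
  · intro s _ hs
    obtain ⟨i, hi⟩ := Finset.nonempty_iff_ne_empty.2 hs
    have hz : (∑ d ∈ T, ∏ j ∈ s, d j) = 0 := by
      have hip : ∀ d : Fin n → ℝ, ∏ j ∈ s, d j = ∏ j, if j ∈ s then d j else 1 := by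
        intro d
        rw [Finset.prod_ite_mem, Finset.univ_inter]
      rw [Finset.sum_congr rfl (fun d _ => hip d),
        ← Finset.prod_univ_sum (fun _ => ({1,-1} : Finset ℝ)) (fun j v => if j ∈ s then v else 1)]
      refine Finset.prod_eq_zero (Finset.mem_univ i) ?_
      simp only [hi, if_true]
      rw [Finset.sum_pair (by norm_num : (1:ℝ) ≠ -1)]
      norm_num
    rw [hz, zero_smul]
  · simp

lemma exists_sign_vector (n : ℕ) (A : Matrix (Fin n) (Fin n) ℝ) (h : A.det ≠ 0) :
    ∃ d : Fin n → ℝ, (∀ i, d i = 1 ∨ d i = -1) ∧ (A + diagonal d).det ≠ 0 := by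
  by_contra hc
  push_neg at hc
  have hsum : ∑ d ∈ Fintype.piFinset (fun _ : Fin n => ({1, -1} : Finset ℝ)),
      (A + diagonal d).det = 0 := by
    refine Finset.sum_eq_zero fun d hd => ?_
    rw [Fintype.mem_piFinset] at hd
    refine hc d fun i => ?_
    have h2 := hd i
    rw [Finset.mem_insert, Finset.mem_singleton] at h2
    exact h2
  rw [det_add_diagonal_sum] at hsum
  rcases mul_eq_zero.mp hsum with h2 | h2
  · exact pow_ne_zero _ (two_ne_zero) h2
  · exact h h2

lemma skew_one_add_det_ne (S : Matrix (Fin n) (Fin n) ℝ) (hS : Sᵀ = -S) :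
    (1 + S).det ≠ 0 := by
  have key : (1 + S)ᵀ * (1 + S) = 1 + Sᵀ * S := by
    rw [transpose_add, transpose_one, hS]
    noncomm_ring
  have hpd : (1 + Sᵀ * S).PosDef := by
    refine Matrix.PosDef.one.add_posSemidef ?_
    have := Matrix.posSemidef_conjTranspose_mul_self S
    rwa [conjTranspose_eq_transpose_of_trivial] at this
  have hdetpos : 0 < (1 + Sᵀ * S).det := hpd.det_pos
  rw [← key, det_mul, det_transpose] at hdetpos
  intro h0
  rw [h0, mul_zero] at hdetpos
  exact lt_irrefl _ hdetpos

lemma cayley_orth (S : Matrix (Fin n) (Fin n) ℝ) (hS : Sᵀ = -S) :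
    ((1 - S) * (1 + S)⁻¹)ᵀ * ((1 - S) * (1 + S)⁻¹) = 1 ∧
      ((1 - S) * (1 + S)⁻¹).det = 1 := by
  have htr : (1 + S)ᵀ = 1 - S := by rw [transpose_add, transpose_one, hS, ← sub_eq_add_neg]
  have hu : IsUnit (1 + S).det := isUnit_iff_ne_zero.2 (skew_one_add_det_ne S hS)
  have hu' : IsUnit (1 - S).det := by rw [← htr, det_transpose]; exact hu
  have hcomm : (1 + S) * (1 - S) = (1 - S) * (1 + S) := by noncomm_ring
  constructor
  · have hBt : ((1 - S) * (1 + S)⁻¹)ᵀ = (1 - S)⁻¹ * (1 + S) := by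
      rw [transpose_mul, transpose_nonsing_inv, htr]
      congr 1
      rw [transpose_sub, transpose_one, hS, sub_neg_eq_add]
    rw [hBt]
    calc (1 - S)⁻¹ * (1 + S) * ((1 - S) * (1 + S)⁻¹)
        = (1 - S)⁻¹ * ((1 + S) * (1 - S)) * (1 + S)⁻¹ := by
          simp only [Matrix.mul_assoc]
      _ = (1 - S)⁻¹ * (1 - S) * ((1 + S) * (1 + S)⁻¹) := by
          rw [hcomm]; simp only [Matrix.mul_assoc]
      _ = 1 := by rw [Matrix.nonsing_inv_mul _ hu', Matrix.mul_nonsing_inv _ hu, mul_one]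
  · rw [det_mul, ← htr, det_transpose, det_nonsing_inv, Ring.inverse_eq_inv']
    exact mul_inv_cancel₀ (skew_one_add_det_ne S hS)

lemma cayley_inv (C : Matrix (Fin n) (Fin n) ℝ) (hC : Cᵀ * C = 1)
    (hdet : (1 + C).det ≠ 0) :
    ((1 - C) * (1 + C)⁻¹)ᵀ = -((1 - C) * (1 + C)⁻¹) ∧
      (1 - (1 - C) * (1 + C)⁻¹) * (1 + (1 - C) * (1 + C)⁻¹)⁻¹ = C := by
  have hdetC : IsUnit C.det := by
    have h1 : Cᵀ.det * C.det = 1 := by rw [← det_mul, hC, det_one]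
    rw [det_transpose] at h1
    exact IsUnit.of_mul_eq_one _ h1
  have hCi : C⁻¹ = Cᵀ := Matrix.inv_eq_left_inv hC
  have hv : IsUnit (1 + C).det := isUnit_iff_ne_zero.2 hdet
  have hcomm : (1 - C) * (1 + C) = (1 + C) * (1 - C) := by noncomm_ring
  have hcomm' : (1 - C) * (1 + C)⁻¹ = (1 + C)⁻¹ * (1 - C) := by
    calc (1 - C) * (1 + C)⁻¹
        = (1 + C)⁻¹ * ((1 + C) * ((1 - C) * (1 + C)⁻¹)) := by
          rw [← Matrix.mul_assoc, Matrix.nonsing_inv_mul _ hv, one_mul]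
      _ = (1 + C)⁻¹ * ((1 - C) * ((1 + C) * (1 + C)⁻¹)) := by
          rw [← Matrix.mul_assoc ((1:Matrix (Fin n) (Fin n) ℝ) + C), ← hcomm, Matrix.mul_assoc]
      _ = (1 + C)⁻¹ * (1 - C) := by
          rw [Matrix.mul_nonsing_inv _ hv, mul_one]
  have hskew : ((1 - C) * (1 + C)⁻¹)ᵀ = -((1 - C) * (1 + C)⁻¹) := by
    have e1 : ((1 - C) * (1 + C)⁻¹)ᵀ = (1 + C⁻¹)⁻¹ * (1 - C⁻¹) := by
      rw [transpose_mul, transpose_nonsing_inv, transpose_add, transpose_one,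
        transpose_sub, transpose_one, hCi]
    have e2 : 1 + C⁻¹ = C⁻¹ * (1 + C) := by
      rw [mul_add, mul_one, Matrix.nonsing_inv_mul _ hdetC, add_comm]
    have e3 : 1 - C⁻¹ = C⁻¹ * (C - 1) := by
      rw [mul_sub, mul_one, Matrix.nonsing_inv_mul _ hdetC]
    rw [e1, e2, e3, Matrix.mul_inv_rev, Matrix.nonsing_inv_nonsing_inv _ hdetC]
    calc (1 + C)⁻¹ * C * (C⁻¹ * (C - 1))
        = (1 + C)⁻¹ * ((C * C⁻¹) * (C - 1)) := by simp only [Matrix.mul_assoc]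
      _ = (1 + C)⁻¹ * (C - 1) := by rw [Matrix.mul_nonsing_inv _ hdetC, one_mul]
      _ = -((1 + C)⁻¹ * (1 - C)) := by rw [← Matrix.mul_neg, neg_sub]
      _ = -((1 - C) * (1 + C)⁻¹) := by rw [hcomm']
  refine ⟨hskew, ?_⟩
  have h2 : ((1:Matrix (Fin n) (Fin n) ℝ) + C) + (1 - C) = (2:ℝ) • 1 := by
    rw [two_smul]; noncomm_ring
  have h1S : 1 + (1 - C) * (1 + C)⁻¹ = (2:ℝ) • (1 + C)⁻¹ := by
    calc 1 + (1 - C) * (1 + C)⁻¹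
        = (1 + C) * (1 + C)⁻¹ + (1 - C) * (1 + C)⁻¹ := by
          rw [Matrix.mul_nonsing_inv _ hv]
      _ = (((1:Matrix (Fin n) (Fin n) ℝ) + C) + (1 - C)) * (1 + C)⁻¹ := by
          rw [← Matrix.add_mul]
      _ = (2:ℝ) • (1 + C)⁻¹ := by rw [h2, Matrix.smul_mul, one_mul]
  have h2S : 1 - (1 - C) * (1 + C)⁻¹ = (2:ℝ) • (C * (1 + C)⁻¹) := by
    calc 1 - (1 - C) * (1 + C)⁻¹
        = (1 + C) * (1 + C)⁻¹ - (1 - C) * (1 + C)⁻¹ := by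
          rw [Matrix.mul_nonsing_inv _ hv]
      _ = (((1:Matrix (Fin n) (Fin n) ℝ) + C) - (1 - C)) * (1 + C)⁻¹ := by
          rw [← Matrix.sub_mul]
      _ = ((2:ℝ) • C) * (1 + C)⁻¹ := by
          congr 1
          rw [two_smul]; noncomm_ring
      _ = (2:ℝ) • (C * (1 + C)⁻¹) := by rw [Matrix.smul_mul]
  have hinv : (1 + (1 - C) * (1 + C)⁻¹)⁻¹ = (2:ℝ)⁻¹ • (1 + C) := by
    apply Matrix.inv_eq_right_inv
    rw [h1S, Matrix.smul_mul, Matrix.mul_smul, smul_smul,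
      mul_inv_cancel₀ (two_ne_zero (α := ℝ)), Matrix.nonsing_inv_mul _ hv, one_smul]
  rw [h2S, hinv, Matrix.smul_mul, Matrix.mul_smul, smul_smul,
    mul_inv_cancel₀ (two_ne_zero (α := ℝ)), one_smul, Matrix.mul_assoc,
    Matrix.nonsing_inv_mul _ hv, mul_one]

/-- For every `n ≥ 3`, the rational special orthogonal matrices are dense in `SO(n, ℝ)`:
given a real `n × n` matrix `A` with `Aᵀ * A = 1` and `det A = 1`, and `ε > 0`, there is a
matrix `B` with rational entries satisfying `Bᵀ * B = 1`, `det B = 1`, and all entries of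
`A - B` of absolute value less than `ε`. -/
theorem so_rational_dense (n : ℕ) (hn : 3 ≤ n)
    (A : Matrix (Fin n) (Fin n) ℝ) (hA : Aᵀ * A = 1) (hdetA : A.det = 1)
    (ε : ℝ) (hε : 0 < ε) :
    ∃ B : Matrix (Fin n) (Fin n) ℝ,
      (∀ i j, ∃ q : ℚ, B i j = (q : ℝ)) ∧
      Bᵀ * B = 1 ∧ B.det = 1 ∧ ∀ i j, |A i j - B i j| < ε := by
  classical
  have hdet : A.det ≠ 0 := by rw [hdetA]; exact one_ne_zero
  obtain ⟨d, hd, hdet2⟩ := exists_sign_vector n A hdet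
  set D : Matrix (Fin n) (Fin n) ℝ := diagonal d with hD
  have hdd : ∀ i, d i * d i = 1 := fun i => by rcases hd i with h | h <;> rw [h] <;> norm_num
  have hDD : D * D = 1 := by
    rw [hD, diagonal_mul_diagonal, ← diagonal_one]
    exact congrArg Matrix.diagonal (funext hdd)
  have hDt : Dᵀ = D := diagonal_transpose d
  set C := A * D with hC
  have hCorth : Cᵀ * C = 1 := by
    rw [hC, transpose_mul, hDt]
    calc D * Aᵀ * (A * D) = D * ((Aᵀ * A) * D) := by simp only [Matrix.mul_assoc]
      _ = 1 := by rw [hA, one_mul, hDD]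
  have hdetD : D.det ≠ 0 := by
    rw [hD, det_diagonal]
    exact Finset.prod_ne_zero_iff.2 fun i _ => by
      rcases hd i with h | h <;> rw [h] <;> norm_num
  have hdet1C : (1 + C).det ≠ 0 := by
    have h1 : (A + D) * D = 1 + C := by
      rw [Matrix.add_mul, hDD, hC, add_comm]
    have := det_mul (A + D) D
    rw [h1] at this
    rw [this]
    exact mul_ne_zero hdet2 hdetD
  set S := (1 - C) * (1 + C)⁻¹ with hS
  obtain ⟨hskewS, hback⟩ := cayley_inv C hCorth hdet1C
  have hdetC : C.det = 1 := by rw [← hback]; exact (cayley_orth _ hskewS).2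
  have hdetD1 : D.det = 1 := by
    have h1 : C.det = A.det * D.det := by rw [hC, det_mul]
    rw [hdetC, hdetA, one_mul] at h1
    exact h1.symm
  -- rational approximations to S
  have hq : ∀ (k : ℕ) (i j : Fin n), ∃ q : ℚ, |S i j - (q : ℝ)| < 1 / (k + 1) :=
    fun k i j => exists_rat_near _ (by positivity)
  choose q hqlt using hq
  set SQ : ℕ → Matrix (Fin n) (Fin n) ℚ := fun k => Matrix.of fun i j =>
    if i < j then q k i j else if j < i then - q k j i else 0 with hSQ
  have hSQskew : ∀ k, (SQ k)ᵀ = -(SQ k) := by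
    intro k
    funext i j
    show SQ k j i = -(SQ k i j)
    simp only [hSQ, Matrix.of_apply]
    rcases lt_trichotomy i j with h | h | h
    · rw [if_neg (asymm h), if_pos h, if_pos h]
    · subst h
      simp [lt_irrefl]
    · rw [if_pos h, if_neg (asymm h), if_pos h, neg_neg]
  set SR : ℕ → Matrix (Fin n) (Fin n) ℝ := fun k => (SQ k).map (Rat.cast) with hSR
  have hSRskew : ∀ k, (SR k)ᵀ = -(SR k) := by
    intro k
    funext i j
    show ((SQ k) j i : ℝ) = -((SQ k) i j : ℝ)
    rw [show (SQ k) j i = ((SQ k)ᵀ) i j from rfl, hSQskew k]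
    push_cast [Matrix.neg_apply]
    ring
  have hSdiag : ∀ i, S i i = 0 := by
    intro i
    have h1 : Sᵀ i i = (-S) i i := by rw [hskewS]
    rw [Matrix.transpose_apply, Matrix.neg_apply] at h1
    linarith
  have hSsym : ∀ i j, S i j = - S j i := by
    intro i j
    have h1 : Sᵀ j i = (-S) j i := by rw [hskewS]
    rw [Matrix.transpose_apply, Matrix.neg_apply] at h1
    linarith
  have hbound : ∀ k i j, |S i j - SR k i j| ≤ 1 / (k + 1) := by
    intro k i j
    show |S i j - ((SQ k i j : ℚ) : ℝ)| ≤ 1 / (k + 1)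
    simp only [hSQ, Matrix.of_apply]
    rcases lt_trichotomy i j with h | h | h
    · rw [if_pos h]
      exact (hqlt k i j).le
    · subst h
      rw [if_neg (lt_irrefl i), if_neg (lt_irrefl i)]
      rw [hSdiag i]
      simp only [Rat.cast_zero, sub_zero, abs_zero]
      positivity
    · rw [if_neg (asymm h), if_pos h, hSsym i j]
      have he : -S j i - ((-(q k j i) : ℚ) : ℝ) = -(S j i - (q k j i : ℝ)) := by
        push_cast; ring
      rw [he, abs_neg]
      exact (hqlt k j i).le
  have htend : Filter.Tendsto SR Filter.atTop (nhds S) := by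
    apply tendsto_pi_nhds.mpr
    intro i
    apply tendsto_pi_nhds.mpr
    intro j
    rw [tendsto_iff_dist_tendsto_zero]
    refine squeeze_zero (fun k => dist_nonneg) (fun k => ?_)
      tendsto_one_div_add_atTop_nhds_zero_nat
    rw [Real.dist_eq, abs_sub_comm]
    exact hbound k i j
  have hinvcont : ContinuousAt Inv.inv (1 + S) := by
    apply continuousAt_matrix_inv
    rw [Ring.inverse_eq_inv']
    exact continuousAt_inv₀ (skew_one_add_det_ne S hskewS)
  have hfc : Filter.Tendsto (fun k => (1 - SR k) * (1 + SR k)⁻¹) Filter.atTop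
      (nhds ((1 - S) * (1 + S)⁻¹)) := by
    have h1 : Filter.Tendsto (fun k => 1 - SR k) Filter.atTop (nhds (1 - S)) :=
      Filter.Tendsto.sub tendsto_const_nhds htend
    have h2 : Filter.Tendsto (fun k => (1 + SR k)⁻¹) Filter.atTop (nhds ((1 + S)⁻¹)) :=
      hinvcont.tendsto.comp (Filter.Tendsto.add tendsto_const_nhds htend)
    exact h1.mul h2
  rw [hback] at hfc
  have hev : ∀ᶠ k in Filter.atTop, ∀ i j,
      |C i j - ((1 - SR k) * (1 + SR k)⁻¹) i j| < ε := by
    rw [Filter.eventually_all]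
    intro i
    rw [Filter.eventually_all]
    intro j
    have hent : Filter.Tendsto (fun k => ((1 - SR k) * (1 + SR k)⁻¹) i j)
        Filter.atTop (nhds (C i j)) :=
      tendsto_pi_nhds.mp (tendsto_pi_nhds.mp hfc i) j
    have hball : ∀ᶠ y in nhds (C i j), |C i j - y| < ε := by
      filter_upwards [Metric.ball_mem_nhds (C i j) hε] with y hy
      rw [Metric.mem_ball, Real.dist_eq] at hy
      rwa [abs_sub_comm]
    exact hent.eventually hball
  obtain ⟨k, hk⟩ := hev.exists
  -- rational matrix
  set SQ0 := SQ k with hSQ0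
  have hcast : ∀ M : Matrix (Fin n) (Fin n) ℚ,
      ((Rat.castHom ℝ).mapMatrix M : Matrix (Fin n) (Fin n) ℝ) = M.map Rat.cast := by
    intro M
    ext i j
    simp [RingHom.mapMatrix_apply]
  have hmap1 : ((Rat.castHom ℝ).mapMatrix (1 + SQ0) : Matrix (Fin n) (Fin n) ℝ) = 1 + SR k := by
    rw [_root_.map_add, _root_.map_one, hcast]
  have hdetQcast : ((1 + SQ0).det : ℝ) = (1 + SR k).det := by
    rw [← hmap1]
    exact RingHom.map_det (Rat.castHom ℝ) (1 + SQ0)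
  have hdetQ : IsUnit (1 + SQ0).det := by
    rw [isUnit_iff_ne_zero]
    intro h0
    apply skew_one_add_det_ne (SR k) (hSRskew k)
    rw [← hdetQcast, h0, Rat.cast_zero]
  set BQ := (1 - SQ0) * (1 + SQ0)⁻¹ with hBQ
  have hmapinv : ((1 + SQ0)⁻¹).map (Rat.cast : ℚ → ℝ) = (1 + SR k)⁻¹ := by
    symm
    apply Matrix.inv_eq_right_inv
    rw [← hmap1, ← hcast, ← _root_.map_mul, Matrix.mul_nonsing_inv _ hdetQ, _root_.map_one]
  have hmapB : BQ.map (Rat.cast : ℚ → ℝ) = (1 - SR k) * (1 + SR k)⁻¹ := by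
    rw [← hcast, hBQ, _root_.map_mul, _root_.map_sub, _root_.map_one, hcast, hcast, hmapinv]
  set B' := (1 - SR k) * (1 + SR k)⁻¹ with hB'
  obtain ⟨hB'orth, hB'det⟩ := cayley_orth (SR k) (hSRskew k)
  refine ⟨B' * D, ?_, ?_, ?_, ?_⟩
  · intro i j
    have hBij : B' i j = (BQ i j : ℝ) := by rw [← hmapB]; rfl
    rw [hD, Matrix.mul_diagonal]
    rcases hd j with h | h
    · exact ⟨BQ i j, by rw [h, mul_one, hBij]⟩
    · exact ⟨-BQ i j, by rw [h, hBij]; push_cast; ring⟩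
  · rw [transpose_mul, hDt]
    calc D * B'ᵀ * (B' * D) = D * ((B'ᵀ * B') * D) := by simp only [Matrix.mul_assoc]
      _ = 1 := by rw [hB'orth, one_mul, hDD]
  · rw [det_mul, hB'det, hdetD1, one_mul]
  · intro i j
    have hAij : A i j = C i j * d j := by
      have h1 : C * D = A := by
        rw [hC, Matrix.mul_assoc, hDD, mul_one]
      rw [← h1, hD, Matrix.mul_diagonal]
    have hBij : (B' * D) i j = B' i j * d j := by rw [hD, Matrix.mul_diagonal]
    rw [hAij, hBij, ← sub_mul, abs_mul]
    have hdj : |d j| = 1 := by rcases hd j with h | h <;> rw [h] <;> norm_num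
    rw [hdj, mul_one]
    exact hk i j
end

section
/- For every n ≥ 1, the rational points of the unit sphere are dense in it: for every x ∈ ℝⁿ with ‖x‖ = 1 (Euclidean norm) and every ε > 0, there exists y ∈ ℝⁿ all of whose coordinates are rational numbers, with ‖y‖ = 1 and ‖x − y‖ < ε. -/
open RealInnerProductSpace

private lemma refl_norm (n : ℕ) (v e : EuclideanSpace ℝ (Fin n)) (hv : v ≠ 0) (he : ‖e‖ = 1) :
    ‖(2 * ⟪e, v⟫ / ‖v‖ ^ 2) • v - e‖ = 1 := by
  have hv2 : ‖v‖ ^ 2 ≠ 0 := pow_ne_zero 2 (norm_ne_zero_iff.mpr hv)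
  have h : ‖(2 * ⟪e, v⟫ / ‖v‖ ^ 2) • v - e‖ ^ 2 = 1 := by
    rw [norm_sub_sq_real, inner_smul_left, norm_smul, real_inner_comm v e]
    simp only [RCLike.conj_to_real, Real.norm_eq_abs, mul_pow, sq_abs, he, one_pow]
    field_simp
    ring
  nlinarith [norm_nonneg ((2 * ⟪e, v⟫ / ‖v‖ ^ 2) • v - e)]

/-- For every `n ≥ 1`, points with rational coordinates on the unit sphere of `ℝⁿ`
(Euclidean norm) are dense in the unit sphere. -/
theorem rational_points_dense_on_sphere (n : ℕ) (hn : 1 ≤ n)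
    (x : EuclideanSpace ℝ (Fin n)) (hx : ‖x‖ = 1) (ε : ℝ) (hε : 0 < ε) :
    ∃ y : EuclideanSpace ℝ (Fin n),
      (∀ i, ∃ q : ℚ, y i = (q : ℝ)) ∧ ‖y‖ = 1 ∧ ‖x - y‖ < ε := by
  classical
  set i₀ : Fin n := ⟨0, hn⟩ with hi₀
  set e : EuclideanSpace ℝ (Fin n) := EuclideanSpace.single i₀ (1 : ℝ) with hedef
  have he : ‖e‖ = 1 := by simp [hedef, EuclideanSpace.norm_single]
  by_cases hxe : x + e = 0
  · refine ⟨x, ?_, hx, by simpa using hε⟩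
    intro i
    have hx' : x = -e := by linear_combination (norm := abel) hxe
    by_cases hi : i = i₀
    · exact ⟨-1, by simp [hx', hedef, hi, EuclideanSpace.single_apply]⟩
    · exact ⟨0, by simp [hx', hedef, EuclideanSpace.single_apply, hi]⟩
  · set v₀ : EuclideanSpace ℝ (Fin n) := x + e with hv₀def
    have hv₀ : v₀ ≠ 0 := hxe
    have hnv₀ : 0 < ‖v₀‖ := norm_pos_iff.mpr hv₀
    set f : EuclideanSpace ℝ (Fin n) → EuclideanSpace ℝ (Fin n) :=
      fun v => (2 * ⟪e, v⟫ / ‖v‖ ^ 2) • v - e with hfdef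
    have hfx : f v₀ = x := by
      have h1 : ‖v₀‖ ^ 2 = 2 + 2 * ⟪x, e⟫ := by
        rw [hv₀def, norm_add_sq_real, hx, he]; ring
      have h2 : 2 * ⟪e, v₀⟫ = 2 + 2 * ⟪x, e⟫ := by
        rw [hv₀def, inner_add_right, real_inner_comm e x, real_inner_self_eq_norm_sq, he]; ring
      have h3 : ‖v₀‖ ^ 2 ≠ 0 := pow_ne_zero 2 (norm_ne_zero_iff.mpr hv₀)
      rw [hfdef]
      simp only
      rw [h2, ← h1, div_self h3, one_smul, hv₀def, add_sub_cancel_right]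
    have hcont : ContinuousAt f v₀ := by
      have h3 : ‖v₀‖ ^ 2 ≠ 0 := pow_ne_zero 2 (norm_ne_zero_iff.mpr hv₀)
      apply ContinuousAt.sub _ continuousAt_const
      refine ContinuousAt.smul (f := fun v => 2 * ⟪e, v⟫ / ‖v‖ ^ 2) (g := fun v => v) ?_ continuousAt_id
      exact ContinuousAt.div ((continuous_const.mul
        ((continuous_const.inner continuous_id))).continuousAt) (by fun_prop) h3
    obtain ⟨δ, hδpos, hδ⟩ := Metric.continuousAt_iff.mp hcont ε hε
    set δ' : ℝ := min δ ‖v₀‖ with hδ'def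
    have hδ'pos : 0 < δ' := lt_min hδpos hnv₀
    set δ'' : ℝ := δ' / (n + 1) with hδ''def
    have hδ''pos : 0 < δ'' := by positivity
    choose q hq using fun i => exists_rat_near (v₀ i) hδ''pos
    set v : EuclideanSpace ℝ (Fin n) := (WithLp.equiv 2 _).symm (fun i => (q i : ℝ)) with hvdef
    have hvi : ∀ i, v i = (q i : ℝ) := fun i => rfl
    have hvnear : ‖v - v₀‖ < δ' := by
      have hsum : ∑ i, ‖(v - v₀) i‖ ^ 2 < δ' ^ 2 := by
        have hb : ∀ i ∈ Finset.univ, ‖(v - v₀) i‖ ^ 2 < δ'' ^ 2 := by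
          intro i _
          have : |(v - v₀) i| < δ'' := by
            have := hq i
            simpa [hvi, abs_sub_comm] using this
          calc ‖(v - v₀) i‖ ^ 2 = |(v - v₀) i| ^ 2 := by rw [Real.norm_eq_abs]
            _ < δ'' ^ 2 := by
                apply sq_lt_sq' _ this
                linarith [abs_nonneg ((v - v₀) i)]
        have hne : (Finset.univ : Finset (Fin n)).Nonempty := ⟨i₀, Finset.mem_univ _⟩
        calc ∑ i, ‖(v - v₀) i‖ ^ 2 < ∑ _i : Fin n, δ'' ^ 2 :=
              Finset.sum_lt_sum_of_nonempty hne hb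
          _ = n * δ'' ^ 2 := by simp [mul_comm]
          _ ≤ δ' ^ 2 := by
              rw [hδ''def, div_pow]
              calc (n : ℝ) * (δ' ^ 2 / (n + 1) ^ 2)
                  ≤ ((n : ℝ) + 1) ^ 2 * (δ' ^ 2 / (n + 1) ^ 2) := by
                    gcongr
                    nlinarith [Nat.cast_nonneg (α := ℝ) n]
                _ = δ' ^ 2 := by field_simp
      rw [EuclideanSpace.norm_eq]
      rw [Real.sqrt_lt' hδ'pos]
      simpa using hsum
    have hvne : v ≠ 0 := by
      intro h0
      rw [h0] at hvnear
      simp only [zero_sub, norm_neg] at hvnear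
      exact absurd hvnear (not_lt.mpr (min_le_right δ ‖v₀‖))
    refine ⟨f v, ?_, refl_norm n v e hvne he, ?_⟩
    · intro i
      have hinner : ⟪e, v⟫ = (q i₀ : ℝ) := by
        rw [hedef, EuclideanSpace.inner_single_left]
        simp [hvi]
      have hnormv : ‖v‖ ^ 2 = ((∑ j, q j ^ 2 : ℚ) : ℝ) := by
        rw [EuclideanSpace.norm_eq, Real.sq_sqrt (by positivity)]
        simp only [hvi, Real.norm_eq_abs, sq_abs]
        push_cast
        ring
      refine ⟨2 * q i₀ / (∑ j, q j ^ 2) * q i - (if i = i₀ then 1 else 0), ?_⟩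
      rw [hfdef]
      simp only [PiLp.sub_apply, PiLp.smul_apply, smul_eq_mul]
      rw [hinner, hnormv, hvi, hedef, EuclideanSpace.single_apply]
      push_cast
      split_ifs <;> push_cast <;> ring
    · have := hδ (show dist v v₀ < δ by
        rw [dist_eq_norm]; exact hvnear.trans_le (min_le_left _ _))
      rw [dist_eq_norm, hfx] at this
      rwa [norm_sub_rev]
end
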